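/- Let α' ∈ R and s', p' ∈ K be such that (1, α') is a K-basis of R and α'² = s'·α' - p'. Then: (i) σ(α') = s' - α'; (ii) if ω' is a unit of R such that Δ_ω(u) = u ⊗ (ω'·α') - (u·σ(α')) ⊗ ω' for all u ∈ R, then ω'·(α' - σ(α')) = ω·(α - σ(α)) and ω'·σ(ω')⁻¹ = ω·σ(ω)⁻¹; and (iii) for such ω', the map ε also satisfies ε(ω') = 0 and ε(ω'·α') = 1. (That is, the involution σ, the element δ = ω·(α - σ(α)), the element θ = ω·σ(ω)⁻¹, and the counit ε do not depend on the choice of K-generator of R.) -/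

import Mathlib

open Polynomial TensorProduct

noncomputable section

variable {K : Type*} [CommRing K]

/-- The quadratic `K`-algebra `K[X]/(X² - s·X + p)`. -/
abbrev Quad (s p : K) : Type _ := AdjoinRoot (X ^ 2 - C s * X + C p)

/-- The image of `X`, i.e. the generator `α`. -/
def qα (s p : K) : Quad s p := AdjoinRoot.root _

lemma quad_aeval_root (s p : K) :
    (aeval (qα s p)) (X ^ 2 - C s * X + C p) = 0 := by
  simp [qα, AdjoinRoot.aeval_eq, AdjoinRoot.mk_self]

/-- The involution `σ` of the quadratic algebra, with `σ α = s - α`. -/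
def qσ (s p : K) : Quad s p →ₐ[K] Quad s p :=
  AdjoinRoot.liftAlgHom _ (Algebra.ofId K (Quad s p)) (algebraMap K (Quad s p) s - qα s p) (by
    rw [Algebra.toRingHom_ofId, ← aeval_def]
    have h := quad_aeval_root s p
    simp only [map_add, map_sub, map_mul, map_pow, aeval_X, aeval_C] at h ⊢
    linear_combination h)
/-- The coproduct `Δ_ω : u ↦ u ⊗ (ω·α) - (u·σ(α)) ⊗ ω`, as a `K`-linear map. -/
def qΔ (s p : K) (w : Quad s p) : Quad s p →ₗ[K] Quad s p ⊗[K] Quad s p :=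
  (TensorProduct.mk K (Quad s p) (Quad s p)).flip (w * qα s p)
    - ((TensorProduct.mk K (Quad s p) (Quad s p)).flip w).comp
        (LinearMap.mulRight K (qσ s p (qα s p)))

lemma quad_monic (s p : K) : (X ^ 2 - C s * X + C p).Monic := by monicity!
lemma quad_natDegree [Nontrivial K] (s p : K) : (X ^ 2 - C s * X + C p).natDegree = 2 := by
  compute_degree!

lemma qα_sq (s p : K) : (qα s p) ^ 2 = algebraMap K (Quad s p) s * qα s p
    - algebraMap K (Quad s p) p := by
  have h := quad_aeval_root s p
  simp only [map_add, map_sub, map_mul, map_pow, aeval_X, aeval_C] at h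
  linear_combination h

lemma qσ_root (s p : K) : qσ s p (qα s p) = algebraMap K (Quad s p) s - qα s p := by
  exact AdjoinRoot.liftAlgHom_root _ _ _ _

section NT
variable [Nontrivial K]

def quadBasis (s p : K) : Module.Basis (Fin 2) K (Quad s p) :=
  ((AdjoinRoot.powerBasis' (quad_monic s p)).basis).reindex (finCongr (quad_natDegree s p))

lemma quadBasis_zero (s p : K) : quadBasis s p 0 = 1 := by
  rw [quadBasis, Module.Basis.reindex_apply, PowerBasis.basis_eq_pow]
  simp
  exact pow_zero _

lemma quadBasis_one (s p : K) : quadBasis s p 1 = qα s p := by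
  rw [quadBasis, Module.Basis.reindex_apply, PowerBasis.basis_eq_pow]
  simp [qα, finCongr_symm, finCongr_apply, Fin.coe_cast]
  exact pow_one _

lemma quad_coords (s p : K) (a b : K)
    (h : algebraMap K (Quad s p) a + algebraMap K (Quad s p) b * qα s p = 0) :
    a = 0 ∧ b = 0 := by
  have h' : a • quadBasis s p 0 + b • quadBasis s p 1 = 0 := by
    rw [quadBasis_zero, quadBasis_one, Algebra.smul_def, Algebra.smul_def, mul_one]
    exact h
  constructor
  · have := congrArg ((quadBasis s p).coord 0) h'
    simpa [Module.Basis.coord_apply, Module.Basis.repr_self, Finsupp.single_apply] using this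
  · have := congrArg ((quadBasis s p).coord 1) h'
    simpa [Module.Basis.coord_apply, Module.Basis.repr_self, Finsupp.single_apply] using this

lemma quad_coords' (s p : K) (a b a' b' : K)
    (h : algebraMap K (Quad s p) a + algebraMap K (Quad s p) b * qα s p
       = algebraMap K (Quad s p) a' + algebraMap K (Quad s p) b' * qα s p) :
    a = a' ∧ b = b' := by
  have h0 := quad_coords s p (a - a') (b - b') (by
    simp only [map_sub]
    linear_combination h)
  exact ⟨by linear_combination h0.1, by linear_combination h0.2⟩

-- coordinate functional φ = coord 1 values
lemma quad_coord1_one (s p : K) : (quadBasis s p).coord 1 (1 : Quad s p) = 0 := by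
  rw [← quadBasis_zero s p]
  simp [Module.Basis.coord_apply, Module.Basis.repr_self, Finsupp.single_apply]

lemma quad_coord1_root (s p : K) : (quadBasis s p).coord 1 (qα s p) = 1 := by
  rw [← quadBasis_one s p]
  simp [Module.Basis.coord_apply, Module.Basis.repr_self]

lemma quad_coord1_aM (s p : K) (t : K) :
    (quadBasis s p).coord 1 (algebraMap K (Quad s p) t) = 0 := by
  rw [Algebra.algebraMap_eq_smul_one, map_smul, quad_coord1_one, smul_zero]

lemma quad_coord1_aM_mul (s p : K) (t : K) (z : Quad s p) :
    (quadBasis s p).coord 1 (algebraMap K (Quad s p) t * z)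
      = t * (quadBasis s p).coord 1 z := by
  rw [← Algebra.smul_def, map_smul, smul_eq_mul]


end NT

/-- Independence of the structure constants on the choice of `K`-generator:
if `(1, α')` is a `K`-basis with `α'² = s'·α' - p'`, then `σ α' = s' - α'`;
if moreover `ω'` is a unit expressing the same coproduct `Δ_ω` in terms of `α'`,
then `ω'·(α' - σ α') = ω·(α - σ α)`, `ω'·σ(ω')⁻¹ = ω·σ(ω)⁻¹`, `ε ω' = 0` and
`ε (ω'·α') = 1`. -/
theorem stmt14 (s p : K) (ω : (Quad s p)ˣ) (ε : Quad s p →ₗ[K] K)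
    (hω : ε (ω : Quad s p) = 0) (hωα : ε ((ω : Quad s p) * qα s p) = 1)
    (α' : Quad s p) (s' p' : K)
    (hbasis : ∃ b : Module.Basis (Fin 2) K (Quad s p), b 0 = 1 ∧ b 1 = α')
    (hα' : α' ^ 2 = algebraMap K (Quad s p) s' * α' - algebraMap K (Quad s p) p') :
    qσ s p α' = algebraMap K (Quad s p) s' - α' ∧
    ∀ ω' : (Quad s p)ˣ,
      (∀ u : Quad s p,
          qΔ s p (ω : Quad s p) u
            = u ⊗ₜ[K] ((ω' : Quad s p) * α')
              - (u * qσ s p α') ⊗ₜ[K] (ω' : Quad s p)) →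
        ((ω' : Quad s p) * (α' - qσ s p α')
            = (ω : Quad s p) * (qα s p - qσ s p (qα s p)) ∧
         (ω' : Quad s p) * Ring.inverse (qσ s p (ω' : Quad s p))
            = (ω : Quad s p) * Ring.inverse (qσ s p (ω : Quad s p)) ∧
         ε (ω' : Quad s p) = 0 ∧ ε ((ω' : Quad s p) * α') = 1) := by
  rcases subsingleton_or_nontrivial K with hK | hK
  · haveI : Subsingleton (Quad s p) := Module.subsingleton K _
    exact ⟨Subsingleton.elim _ _, fun ω' _ =>
      ⟨Subsingleton.elim _ _, Subsingleton.elim _ _,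
       Subsingleton.elim _ _, Subsingleton.elim _ _⟩⟩
  obtain ⟨b', hb'0, hb'1⟩ := hbasis
  set aM := algebraMap K (Quad s p) with haM
  set c := (quadBasis s p).repr α' 0 with hc
  set d := (quadBasis s p).repr α' 1 with hd
  set x := b'.repr (qα s p) 0 with hx
  set y := b'.repr (qα s p) 1 with hy
  have hα'cd : α' = aM c + aM d * qα s p := by
    have h := (quadBasis s p).sum_repr α'
    rw [Fin.sum_univ_two, quadBasis_zero, quadBasis_one] at h
    rw [← h, Algebra.smul_def, Algebra.smul_def, mul_one]
  have hαxy : qα s p = aM x + aM y * α' := by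
    have h := b'.sum_repr (qα s p)
    rw [Fin.sum_univ_two, hb'0, hb'1] at h
    rw [← h, Algebra.smul_def, Algebra.smul_def, mul_one]
  -- y * d = 1
  have hyd : y * d = 1 := by
    have h1 : aM (x + y * c) + aM (y * d) * qα s p = aM 0 + aM 1 * qα s p := by
      simp only [map_add, map_mul, map_one, map_zero]
      linear_combination - hαxy - aM y * hα'cd
    have := (quad_coords' s p _ _ _ _ h1).2
    linear_combination this
  have hyd1 : aM y * aM d = 1 := by rw [← map_mul, hyd, map_one]
  -- structure constant comparison
  have hsd : 2 * c * d + d * d * s = s' * d := by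
    have h2 : aM (c * c - d * d * p) + aM (2 * c * d + d * d * s) * qα s p
        = aM (s' * c - p') + aM (s' * d) * qα s p := by
      simp only [map_add, map_sub, map_mul, map_ofNat]
      linear_combination hα' - (α' + aM c + aM d * qα s p - aM s') * hα'cd
        - aM d * aM d * qα_sq s p
    exact (quad_coords' s p _ _ _ _ h2).2
  have hs' : s' = c + c + d * s := by
    linear_combination - y * hsd + (c + c + d * s - s') * hyd
  have hs'R : aM s' = aM c + aM c + aM d * aM s := by
    rw [hs']; simp only [map_add, map_mul]
  -- part (i)
  have part1 : qσ s p α' = aM s' - α' := by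
    have hcomm : ∀ t : K, qσ s p (aM t) = aM t := fun t => (qσ s p).commutes t
    have hσ : qσ s p α' = aM c + aM d * (aM s - qα s p) := by
      rw [hα'cd]
      rw [map_add, map_mul, hcomm, hcomm, qσ_root]
    rw [hσ, hα'cd]
    linear_combination - hs'R
  refine ⟨part1, fun ω' hΔ' => ?_⟩
  -- the coproduct equation at u = 1
  have h1 : (1 : Quad s p) ⊗ₜ[K] ((ω : Quad s p) * qα s p)
        - (1 * qσ s p (qα s p)) ⊗ₜ[K] (ω : Quad s p)
      = (1 : Quad s p) ⊗ₜ[K] ((ω' : Quad s p) * α')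
        - (1 * qσ s p α') ⊗ₜ[K] (ω' : Quad s p) := by
    have := hΔ' 1
    rw [← this]
    simp [qΔ, TensorProduct.mk_apply, LinearMap.sub_apply, LinearMap.comp_apply,
      LinearMap.mulRight_apply, LinearMap.flip_apply]
  rw [one_mul, one_mul, qσ_root, part1] at h1
  -- apply (coord 1 ⊗ id)
  have hF := congrArg ((TensorProduct.lid K (Quad s p)).toLinearMap ∘ₗ
      LinearMap.rTensor (Quad s p) ((quadBasis s p).coord 1)) h1
  simp only [LinearMap.comp_apply, map_sub, LinearMap.rTensor_tmul,
    LinearEquiv.coe_coe, lid_tmul, quad_coord1_one, quad_coord1_root,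
    quad_coord1_aM, map_sub, zero_smul, sub_smul, one_smul, zero_sub, neg_neg,
    zero_smul, sub_zero] at hF
  have hφaM : (quadBasis s p).coord 1 (aM s') = 0 := quad_coord1_aM s p s'
  have hφα' : (quadBasis s p).coord 1 α' = d := by
    rw [Module.Basis.coord_apply]
  rw [hφaM, hφα'] at hF
  have hdω : (ω : Quad s p) = aM d * (ω' : Quad s p) := by
    rw [← Algebra.smul_def]
    simpa using hF
  refine ⟨?_, ?_, ?_, ?_⟩
  · rw [part1, qσ_root]
    linear_combination (2 * (ω' : Quad s p)) * hα'cd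
      + (aM s - 2 * qα s p) * hdω - (ω' : Quad s p) * hs'R
  · have hσω : qσ s p (ω : Quad s p) = aM d * qσ s p (ω' : Quad s p) := by
      rw [hdω, map_mul, (qσ s p).commutes]
    have hdu : IsUnit (aM d) := IsUnit.of_mul_eq_one (aM y) (by
      rw [mul_comm]; exact hyd1)
    rw [hσω, Ring.mul_inverse_rev, hdω]
    rw [show aM d * (ω' : Quad s p) * (Ring.inverse (qσ s p (ω' : Quad s p))
        * Ring.inverse (aM d))
      = (ω' : Quad s p) * Ring.inverse (qσ s p (ω' : Quad s p))
        * (aM d * Ring.inverse (aM d)) by ring]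
    rw [Ring.mul_inverse_cancel _ hdu, mul_one]
  · have hω'aM : (ω' : Quad s p) = aM y * (ω : Quad s p) := by
      rw [hdω, ← mul_assoc, hyd1, one_mul]
    rw [hω'aM, ← Algebra.smul_def, map_smul, hω, smul_zero]
  · have hω'aM : (ω' : Quad s p) = aM y * (ω : Quad s p) := by
      rw [hdω, ← mul_assoc, hyd1, one_mul]
    have hkey : (ω' : Quad s p) * α'
        = (y * c) • (ω : Quad s p) + (ω : Quad s p) * qα s p := by
      simp only [Algebra.smul_def, map_mul]
      linear_combination (ω' : Quad s p) * hα'cd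
        + (aM c + aM d * qα s p) * hω'aM
        + ((ω : Quad s p) * qα s p) * hyd1
    rw [hkey, map_add, map_smul, hω, hωα, smul_zero, zero_add]
end
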